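/- Let γ : ℝ → ℂ be a C¹-smooth, 2π-periodic map and let a, λ ∈ ℝ. Suppose that γ(t + a) − γ(t) = λ·(γ'(t) + γ'(t + a)) for all t ∈ ℝ. Then for every integer n with c_n(γ) ≠ 0 one has e^{ina} − 1 = i·λ·n·(e^{ina} + 1). In particular, if e^{ia} ≠ −1 and at least one of c₁(γ), c₋₁(γ) is nonzero, then λ = tan(a/2). -/

import Mathlib

/-- The `n`-th Fourier coefficient of a `2π`-periodic function `γ : ℝ → ℂ`. -/
noncomputable def fourierCoef (γ : ℝ → ℂ) (n : ℤ) : ℂ :=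
  (1 / (2 * (Real.pi : ℂ))) * ∫ t in (0 : ℝ)..(2 * Real.pi),
    γ t * Complex.exp (-(Complex.I * n * t))

private lemma expI_cont (n : ℤ) :
    Continuous fun t : ℝ => Complex.exp (-(Complex.I * n * t)) :=
  Complex.continuous_exp.comp (by continuity)

private lemma expI_per (n : ℤ) (t : ℝ) :
    Complex.exp (-(Complex.I * (n : ℂ) * ((t + 2 * Real.pi : ℝ) : ℂ)))
      = Complex.exp (-(Complex.I * n * t)) := by
  have h1 : Complex.exp (((-n : ℤ) : ℂ) * (2 * Real.pi * Complex.I)) = 1 :=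
    Complex.exp_int_mul_two_pi_mul_I (-n)
  have h2 : -(Complex.I * (n : ℂ) * ((t + 2 * Real.pi : ℝ) : ℂ))
      = -(Complex.I * n * t) + ((-n : ℤ) : ℂ) * (2 * Real.pi * Complex.I) := by
    push_cast; ring
  rw [h2, Complex.exp_add, h1, mul_one]

private lemma fourierCoef_shift (f : ℝ → ℂ) (hf : Continuous f)
    (hp : ∀ t, f (t + 2 * Real.pi) = f t) (a : ℝ) (n : ℤ) :
    fourierCoef (fun t => f (t + a)) n
      = Complex.exp (Complex.I * n * a) * fourierCoef f n := by
  set g : ℝ → ℂ := fun s => f s * Complex.exp (-(Complex.I * n * s)) with hg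
  have hgper : Function.Periodic g (2 * Real.pi) := by
    intro s
    simp only [hg]
    rw [hp]
    congr 1
    exact expI_per n s
  have h1 : (∫ t in (0:ℝ)..(2 * Real.pi), f (t + a) * Complex.exp (-(Complex.I * n * t)))
      = Complex.exp (Complex.I * n * a) * ∫ t in (0:ℝ)..(2 * Real.pi), g (t + a) := by
    rw [← intervalIntegral.integral_const_mul]
    apply intervalIntegral.integral_congr
    intro t _
    simp only [hg]
    have hkey : Complex.exp (Complex.I * n * a)
        * Complex.exp (-(Complex.I * n * ((t + a : ℝ) : ℂ)))
        = Complex.exp (-(Complex.I * n * t)) := by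
      rw [← Complex.exp_add]; congr 1; push_cast; ring
    rw [← hkey]; ring
  have h2 : (∫ t in (0:ℝ)..(2 * Real.pi), g (t + a))
      = ∫ t in (0:ℝ)..(2 * Real.pi), g t := by
    rw [intervalIntegral.integral_comp_add_right]
    have := hgper.intervalIntegral_add_eq a 0
    simpa [zero_add, add_comm] using this
  simp only [fourierCoef]
  rw [h1, h2]
  ring

private lemma fourierCoef_deriv (f : ℝ → ℂ) (hf : ContDiff ℝ 1 f)
    (hp : ∀ t, f (t + 2 * Real.pi) = f t) (n : ℤ) :
    fourierCoef (deriv f) n = Complex.I * n * fourierCoef f n := by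
  have hdiff : Differentiable ℝ f := hf.differentiable one_ne_zero
  have hc : Continuous f := hf.continuous
  have hc' : Continuous (deriv f) := hf.continuous_deriv le_rfl
  have hu : ∀ t : ℝ, HasDerivAt (fun s : ℝ => Complex.exp (-(Complex.I * n * s)))
      (-(Complex.I * n) * Complex.exp (-(Complex.I * n * t))) t := by
    intro t
    have hbase : HasDerivAt (fun s : ℝ => (s : ℂ)) 1 t := by
      exact Complex.ofRealCLM.hasDerivAt (x := t)
    have hinner : HasDerivAt (fun s : ℝ => -(Complex.I * n * (s : ℂ))) (-(Complex.I * n)) t := by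
      have h := (hbase.const_mul (Complex.I * n)).neg; rw [mul_one] at h; exact h
    simpa [mul_comm] using hinner.cexp
  have key := intervalIntegral.integral_mul_deriv_eq_deriv_mul
    (a := (0:ℝ)) (b := 2 * Real.pi)
    (u := fun s : ℝ => Complex.exp (-(Complex.I * n * s))) (v := f)
    (u' := fun s : ℝ => -(Complex.I * n) * Complex.exp (-(Complex.I * n * s)))
    (v' := deriv f)
    (fun t _ => hu t) (fun t _ => (hdiff t).hasDerivAt)
    ((continuous_const.mul (expI_cont n)).intervalIntegrable _ _)
    (hc'.intervalIntegrable _ _)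
  have hb1 : Complex.exp (-(Complex.I * n * ((2 * Real.pi : ℝ) : ℂ))) = 1 := by
    have := expI_per n 0
    simpa using this
  have hb2 : f (2 * Real.pi) = f 0 := by
    have := hp 0
    simpa using this
  beta_reduce at key
  rw [hb1, hb2] at key
  simp only [Complex.ofReal_zero, mul_zero, neg_zero, Complex.exp_zero, one_mul] at key
  -- key : ∫ exp(-(I n t)) * deriv f t = f 0 - f 0 - ∫ (-(I n) * exp) * f
  have hint1 : (∫ t in (0:ℝ)..(2 * Real.pi), deriv f t * Complex.exp (-(Complex.I * n * t)))
      = ∫ t in (0:ℝ)..(2 * Real.pi), Complex.exp (-(Complex.I * n * t)) * deriv f t := by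
    apply intervalIntegral.integral_congr; intro t _; ring
  have hint2 : (∫ t in (0:ℝ)..(2 * Real.pi),
        -(Complex.I * n) * Complex.exp (-(Complex.I * n * t)) * f t)
      = -(Complex.I * n) * ∫ t in (0:ℝ)..(2 * Real.pi), f t * Complex.exp (-(Complex.I * n * t)) := by
    rw [← intervalIntegral.integral_const_mul]
    apply intervalIntegral.integral_congr; intro t _; ring
  rw [hint2] at key
  simp only [fourierCoef]
  rw [hint1, key]
  ring

private lemma fourierCoef_sub (f g : ℝ → ℂ) (hf : Continuous f) (hg : Continuous g) (n : ℤ) :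
    fourierCoef (fun t => f t - g t) n = fourierCoef f n - fourierCoef g n := by
  simp only [fourierCoef]
  rw [← mul_sub, ← intervalIntegral.integral_sub
    ((show Continuous fun t : ℝ => f t * Complex.exp (-(Complex.I * n * t)) from hf.mul (expI_cont n)).intervalIntegrable _ _)
    ((show Continuous fun t : ℝ => g t * Complex.exp (-(Complex.I * n * t)) from hg.mul (expI_cont n)).intervalIntegrable _ _)]
  congr 1
  apply intervalIntegral.integral_congr; intro t _; ring

private lemma fourierCoef_add (f g : ℝ → ℂ) (hf : Continuous f) (hg : Continuous g) (n : ℤ) :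
    fourierCoef (fun t => f t + g t) n = fourierCoef f n + fourierCoef g n := by
  simp only [fourierCoef]
  rw [← mul_add, ← intervalIntegral.integral_add
    ((show Continuous fun t : ℝ => f t * Complex.exp (-(Complex.I * n * t)) from hf.mul (expI_cont n)).intervalIntegrable _ _)
    ((show Continuous fun t : ℝ => g t * Complex.exp (-(Complex.I * n * t)) from hg.mul (expI_cont n)).intervalIntegrable _ _)]
  congr 1
  apply intervalIntegral.integral_congr; intro t _; ring

private lemma fourierCoef_const_mul (c : ℂ) (f : ℝ → ℂ) (n : ℤ) :
    fourierCoef (fun t => c * f t) n = c * fourierCoef f n := by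
  simp only [fourierCoef]
  have : (∫ t in (0:ℝ)..(2 * Real.pi), c * f t * Complex.exp (-(Complex.I * n * t)))
      = ∫ t in (0:ℝ)..(2 * Real.pi), c * (f t * Complex.exp (-(Complex.I * n * t))) := by
    apply intervalIntegral.integral_congr; intro t _; ring
  rw [this, intervalIntegral.integral_const_mul]
  ring

theorem stmt_8 (γ : ℝ → ℂ) (hγ : ContDiff ℝ 1 γ)
    (hper : ∀ t : ℝ, γ (t + 2 * Real.pi) = γ t)
    (a lam : ℝ)
    (heq : ∀ t : ℝ, γ (t + a) - γ t = (lam : ℂ) * (deriv γ t + deriv γ (t + a))) :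
    (∀ n : ℤ, fourierCoef γ n ≠ 0 →
      Complex.exp (Complex.I * n * a) - 1 =
        Complex.I * lam * n * (Complex.exp (Complex.I * n * a) + 1)) ∧
    (Complex.exp (Complex.I * a) ≠ -1 →
      (fourierCoef γ 1 ≠ 0 ∨ fourierCoef γ (-1) ≠ 0) →
      lam = Real.tan (a / 2)) := by
  have hcont : Continuous γ := hγ.continuous
  have hdcont : Continuous (deriv γ) := hγ.continuous_deriv le_rfl
  have hdper : ∀ t, deriv γ (t + 2 * Real.pi) = deriv γ t := by
    intro t
    have h1 : deriv (fun x => γ (x + 2 * Real.pi)) t = deriv γ (t + 2 * Real.pi) :=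
      deriv_comp_add_const γ _ t
    rw [← h1]
    congr 1
    funext s
    exact hper s
  have part1 : ∀ n : ℤ, fourierCoef γ n ≠ 0 →
      Complex.exp (Complex.I * n * a) - 1 =
        Complex.I * lam * n * (Complex.exp (Complex.I * n * a) + 1) := by
    intro n hn
    set c := fourierCoef γ n with hc
    set E := Complex.exp (Complex.I * n * a) with hE
    have e1 : fourierCoef (fun t => γ (t + a)) n = E * c := fourierCoef_shift γ hcont hper a n
    have e2 : fourierCoef (deriv γ) n = Complex.I * n * c := fourierCoef_deriv γ hγ hper n
    have e3 : fourierCoef (fun t => deriv γ (t + a)) n = E * (Complex.I * n * c) := by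
      rw [fourierCoef_shift (deriv γ) hdcont hdper a n, e2]
    have e4 : fourierCoef (fun t => γ (t + a) - γ t) n
        = fourierCoef (fun t => (lam : ℂ) * (deriv γ t + deriv γ (t + a))) n := by
      congr 1
      funext t
      exact heq t
    rw [fourierCoef_sub (fun t => γ (t + a)) γ
        (hcont.comp (continuous_id.add continuous_const)) hcont n,
      fourierCoef_const_mul,
      fourierCoef_add (deriv γ) (fun t => deriv γ (t + a)) hdcont
        (hdcont.comp (continuous_id.add continuous_const)) n,
      e1, e2, e3] at e4
    have e5 : (E - 1) * c = (Complex.I * lam * n * (E + 1)) * c := by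
      linear_combination e4
    exact mul_right_cancel₀ hn e5
  refine ⟨part1, ?_⟩
  intro hne hcoef
  -- the key complex equation for n = 1
  have key : Complex.exp (Complex.I * a) - 1
      = Complex.I * lam * (Complex.exp (Complex.I * a) + 1) := by
    rcases hcoef with h | h
    · have h1 := part1 1 h
      have hcast : Complex.I * ((1 : ℤ) : ℂ) * (a : ℂ) = Complex.I * a := by push_cast; ring
      rw [hcast] at h1
      push_cast at h1
      linear_combination h1
    · have h1 := part1 (-1) h
      have hcast : Complex.I * ((-1 : ℤ) : ℂ) * (a : ℂ) = -(Complex.I * a) := by push_cast; ring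
      rw [hcast] at h1
      push_cast at h1
      have hinv : Complex.exp (Complex.I * a) * Complex.exp (-(Complex.I * a)) = 1 := by
        rw [← Complex.exp_add]; simp
      linear_combination (-(Complex.exp (Complex.I * (a : ℂ)))) * h1
        + (1 + Complex.I * (lam : ℂ)) * hinv
  -- half-angle factorizations
  have he : Complex.exp (Complex.I * ((a / 2 : ℝ) : ℂ))
      = Complex.cos ((a / 2 : ℝ) : ℂ) + Complex.sin ((a / 2 : ℝ) : ℂ) * Complex.I := by
    rw [mul_comm]; exact Complex.exp_mul_I _
  have hsq : Complex.exp (Complex.I * (a : ℂ))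
      = Complex.exp (Complex.I * ((a / 2 : ℝ) : ℂ)) ^ 2 := by
    rw [sq, ← Complex.exp_add]; congr 1; push_cast; ring
  have hpyth : Complex.sin ((a / 2 : ℝ) : ℂ) ^ 2 + Complex.cos ((a / 2 : ℝ) : ℂ) ^ 2 = 1 :=
    Complex.sin_sq_add_cos_sq _
  have hfac1 : Complex.exp (Complex.I * (a : ℂ)) + 1
      = 2 * Complex.cos ((a / 2 : ℝ) : ℂ) * Complex.exp (Complex.I * ((a / 2 : ℝ) : ℂ)) := by
    rw [hsq, he]
    linear_combination (Complex.sin ((a / 2 : ℝ) : ℂ)) ^ 2 * Complex.I_sq - hpyth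
  have hfac2 : Complex.exp (Complex.I * (a : ℂ)) - 1
      = 2 * Complex.I * Complex.sin ((a / 2 : ℝ) : ℂ)
        * Complex.exp (Complex.I * ((a / 2 : ℝ) : ℂ)) := by
    rw [hsq, he]
    linear_combination (-(Complex.sin ((a / 2 : ℝ) : ℂ)) ^ 2) * Complex.I_sq + hpyth
  have hcosR : Real.cos (a / 2) ≠ 0 := by
    intro h0
    apply hne
    have hc0 : Complex.cos ((a / 2 : ℝ) : ℂ) = 0 := by
      rw [← Complex.ofReal_cos, h0, Complex.ofReal_zero]
    rw [hc0] at hfac1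
    simp only [mul_zero, zero_mul] at hfac1
    linear_combination hfac1
  have he0 : Complex.exp (Complex.I * ((a / 2 : ℝ) : ℂ)) ≠ 0 := Complex.exp_ne_zero _
  have h2 : (2 * Complex.I * Complex.sin ((a / 2 : ℝ) : ℂ))
        * Complex.exp (Complex.I * ((a / 2 : ℝ) : ℂ))
      = ((lam : ℂ) * (2 * Complex.I * Complex.cos ((a / 2 : ℝ) : ℂ)))
        * Complex.exp (Complex.I * ((a / 2 : ℝ) : ℂ)) := by
    linear_combination key - hfac2 + Complex.I * (lam : ℂ) * hfac1
  have h3 := mul_right_cancel₀ he0 h2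
  have hI2 : (2 * Complex.I : ℂ) ≠ 0 := by
    simp [Complex.I_ne_zero]
  have h4 : Complex.sin ((a / 2 : ℝ) : ℂ) = (lam : ℂ) * Complex.cos ((a / 2 : ℝ) : ℂ) :=
    mul_left_cancel₀ hI2 (by linear_combination h3)
  have h5 : Real.sin (a / 2) = lam * Real.cos (a / 2) := by
    exact_mod_cast h4
  rw [Real.tan_eq_sin_div_cos]
  field_simp
  linarith [h5]
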